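/- For all integers n ≥ 1 and all 0 ≤ l ≤ n−1, the alternating sum Σ_{j=0}^{n−l−1} binom(n−l−1, j)·(−1)^{l+j}/(l+j+1) equals (−1)^l·(1/n)·binom(n−1, l)⁻¹. Equivalently, Σ_{T ⊆ S ⊆ [n−1]} (−1)^{|S|}/(|S|+1) = (−1)^{|T|}·(1/n)·binom(n−1,|T|)⁻¹ for any fixed subset T ⊆ [n−1] with |T| = l, summing over all S containing T. -/

import Mathlib

open Finset

lemma bch_aux (m : ℕ) : ∀ l : ℕ,
    ∑ j ∈ Finset.range (m + 1), (m.choose j : ℚ) * (-1) ^ j / (l + j + 1)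
      = (l.factorial * m.factorial : ℚ) / (l + m + 1).factorial := by
  induction m with
  | zero =>
    intro l
    simp only [zero_add, Nat.choose_zero_right, Finset.sum_range_one, Nat.cast_one, pow_zero,
      Nat.factorial_succ, Nat.cast_zero, add_zero, Nat.factorial_zero]
    have : (l.factorial : ℚ) ≠ 0 := by positivity
    push_cast
    field_simp
  | succ m ih =>
    intro l
    have hS : ∑ j ∈ Finset.range (m + 2), (m.choose j : ℚ) * (-1) ^ j / (l + j + 1)
        = (l.factorial * m.factorial : ℚ) / (l + m + 1).factorial := by
      rw [Finset.sum_range_succ, ih l]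
      simp
    rw [Finset.sum_range_succ'] at hS ⊢
    push_cast at hS ⊢
    have hB : ∑ j ∈ Finset.range (m + 1),
        (m.choose j : ℚ) * (-1) ^ (j + 1) / (l + (j + 1) + 1)
        = -(((l+1).factorial * m.factorial : ℚ) / ((l+1) + m + 1).factorial) := by
      rw [← ih (l + 1)]
      rw [← Finset.sum_neg_distrib]
      apply Finset.sum_congr rfl
      intro j _
      push_cast
      ring
    have key : ∀ j ∈ Finset.range (m + 1),
        ((m+1).choose (j+1) : ℚ) * (-1) ^ (j+1) / (l + (j+1) + 1)
        = (m.choose (j+1) : ℚ) * (-1) ^ (j+1) / (l + (j+1) + 1)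
          + (m.choose j : ℚ) * (-1) ^ (j+1) / (l + (j+1) + 1) := by
      intro j _
      rw [Nat.choose_succ_succ']
      push_cast
      ring
    rw [Finset.sum_congr rfl key, Finset.sum_add_distrib, hB]
    have hA : ∑ j ∈ Finset.range (m + 1),
        (m.choose (j+1) : ℚ) * (-1) ^ (j+1) / (l + (j+1) + 1)
        = (l.factorial * m.factorial : ℚ) / (l + m + 1).factorial
          - (m.choose 0 : ℚ) * (-1) ^ 0 / (l + 0 + 1) := by
      linarith [hS]
    rw [hA]
    simp only [Nat.choose_zero_right, Nat.choose_self, Nat.cast_one, pow_zero]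
    have h1 : ((l + m + 1).factorial : ℚ) ≠ 0 := by positivity
    have h2 : ((l + (m+1) + 1).factorial : ℚ) ≠ 0 := by positivity
    have h3 : ((l:ℚ) + 1) ≠ 0 := by positivity
    have e1 : ((l+1) + m + 1).factorial = (l + (m+1) + 1).factorial := by ring_nf
    have e2 : ((l + (m+1) + 1).factorial : ℚ) = (l + m + 2) * (l + m + 1).factorial := by
      have : l + (m+1) + 1 = (l + m + 1) + 1 := by ring
      rw [this, Nat.factorial_succ]
      push_cast
      ring
    rw [e1, e2]
    rw [Nat.factorial_succ l, Nat.factorial_succ m]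
    field_simp
    push_cast
    ring

theorem bch_coefficient_identity (n l : ℕ) (hn : 1 ≤ n) (hl : l ≤ n - 1) :
    ∑ j ∈ Finset.range (n - l), ((n - l - 1).choose j : ℚ) * (-1) ^ (l + j) / (l + j + 1)
      = (-1) ^ l * (1 / n) * (((n - 1).choose l : ℚ))⁻¹ := by
  set m := n - l - 1 with hm
  have hnl : n - l = m + 1 := by omega
  have hn' : l + m + 1 = n := by omega
  have h := bch_aux m l
  rw [hnl]
  have : ∑ j ∈ Finset.range (m + 1), (m.choose j : ℚ) * (-1) ^ (l + j) / (l + j + 1)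
      = (-1) ^ l * ∑ j ∈ Finset.range (m + 1), (m.choose j : ℚ) * (-1) ^ j / (l + j + 1) := by
    rw [Finset.mul_sum]
    apply Finset.sum_congr rfl
    intro j _
    rw [pow_add]
    ring
  rw [this, h, hn']
  have hchoose : ((n-1).choose l : ℚ) = (n-1).factorial / (l.factorial * m.factorial) := by
    have h1 : ((n - 1).choose l * l.factorial * m.factorial : ℚ) = ((n-1).factorial : ℚ) := by
      have hmm : m = (n - 1) - l := by omega
      rw [hmm]
      exact_mod_cast congrArg (Nat.cast (R := ℚ)) (Nat.choose_mul_factorial_mul_factorial hl)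
    rw [eq_div_iff (by positivity), ← mul_assoc]
    exact h1
  rw [hchoose]
  have hfact : (n.factorial : ℚ) = n * (n-1).factorial := by
    have h : n - 1 + 1 = n := by omega
    calc (n.factorial : ℚ) = ((n-1+1).factorial : ℚ) := by rw [h]
      _ = ((n-1:ℕ)+1) * (n-1).factorial := by rw [Nat.factorial_succ]; push_cast; ring
      _ = n * (n-1).factorial := by rw [show ((n-1:ℕ):ℚ)+1 = ((n-1+1:ℕ):ℚ) by push_cast; ring, h]
  rw [hfact]
  have : ((n-1).factorial : ℚ) ≠ 0 := by positivity
  have : (l.factorial : ℚ) ≠ 0 := by positivity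
  have : (m.factorial : ℚ) ≠ 0 := by positivity
  have : (n : ℚ) ≠ 0 := by positivity
  field_simp
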